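/- In any algebra (S,*,') satisfying the three axioms, the binary operation is associative: (x * y) * z = x * (y * z) for all x, y, z in S. -/
import Mathlib


theorem stmt (S : Type*) (m : S → S → S) (i : S → S)
    (E1 : ∀ x, m (m x (i x)) x = x)
    (E2 : ∀ x y, m (m x (i x)) (m (i y) y) = m (m (i y) y) (m x (i x)))
    (E3 : ∀ x y z, m (m x y) z = m x (m y (i (i z)))) :
    ∀ x y z, m (m x y) z = m x (m y z) := by
  have eq2 : ∀ x z, m (m (m x (i (i z))) (i z)) z = m x (i (i z)) := by
    intro x z
    rw [E3 x (i (i z)) (i z), E3 x (m (i (i z)) (i (i (i z)))) z, E1 (i (i z))]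
  have eq3 : ∀ z, m (i z) (i (i z)) = m (i z) z := by
    intro z
    rw [← eq2 (i z) z, E1 (i z)]
  have eq4 : ∀ z, m (m (i z) z) (i z) = i z := by
    intro z
    rw [← eq3, E1]
  have eq5 : ∀ z, m (m (i (i z)) (i z)) z = i (i z) := by
    intro z
    have h := eq2 (m (i (i z)) (i (i (i z)))) z
    rw [E1 (i (i z))] at h
    exact h
  have eq6 : ∀ u w, m u (m (i w) w) = m (m u (i w)) w := by
    intro u w
    rw [← eq3, ← E3]
  have eq11 : ∀ w, m (m (i w) w) (m (i w) w) = m (i w) w := by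
    intro w
    have h := eq6 (m (i w) (i (i w))) w
    rw [E1 (i w), eq3] at h
    exact h
  have eq12 : ∀ w, m (i (i (i w))) (i (i w)) = m (i (i (i w))) w := by
    intro w
    have h := eq2 (i (i (i w))) w
    rw [eq5 (i w)] at h
    exact h.symm
  have eq13 : ∀ w, m (m (i (i (i w))) w) (i w) = i (i (i w)) := by
    intro w
    have h := eq5 (i w)
    rw [eq12] at h
    exact h
  have eq15 : ∀ u w, m (m u (m (i (i w)) (i w))) w = m u (i (i w)) := by
    intro u w
    rw [E3, eq4 (i w)]
  have eq25 : ∀ u v, m (m (m u (i (i (i v)))) v) (i v) = m u (i (i (i v))) := by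
    intro u v
    rw [E3 u (i (i (i v))) v]
    exact eq15 u (i v)
  have eq33 : ∀ v y, m (m (i v) v) (m (i y) y) = m (m (m (i y) y) (i v)) v := by
    intro v y
    have h := E2 (i v) y
    rw [eq3 v] at h
    rw [h, eq6]
  have eq34 : ∀ v, m (m (m (i v) v) (i (i (i v)))) v = m (i (i (i v))) v := by
    intro v
    have h := eq33 v (i (i v))
    rw [eq5 (i v), eq12 v] at h
    rw [E3, eq12 v]
    exact h
  have eq35 : ∀ v, m (m (i v) v) (i (i (i v))) = i (i (i v)) := by
    intro v
    have h := eq25 (m (i v) v) v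
    rw [eq34, eq13] at h
    exact h.symm
  have eq36 : ∀ u v, m (m u (m (i v) v)) (i v) = m u (i (i (i v))) := by
    intro u v
    rw [E3, eq35]
  have eq37 : ∀ v, i (i (i v)) = i v := by
    intro v
    have h := eq36 (m (i v) v) v
    rw [eq11, eq4, eq35] at h
    exact h.symm
  have eq46 : ∀ x y z, m (m x y) (i (i z)) = m (m x y) z := by
    intro x y z
    rw [E3 x y (i (i z)), E3 x y z, eq37 (i z)]
  have eq47 : ∀ x z, m x (i (i z)) = m x z := by
    intro x z
    rw [← E1 x, eq46]
  intro x y z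
  rw [E3, eq47]
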